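/- Let G be a group and S a nonempty finite subset of G. Then every right complement of S in G contains a minimal right complement of S; i.e., if S·C = G then there exists C' ⊆ C with S·C' = G and S·(C' \ {c}) ≠ G for every c ∈ C'. -/

import Mathlib

open Pointwise

theorem stmt_7 {G : Type*} [Group G] (S : Set G) (hfin : S.Finite) (hne : S.Nonempty)
    (C : Set G) (hC : S * C = Set.univ) :
    ∃ C' ⊆ C, S * C' = Set.univ ∧ ∀ c ∈ C', S * (C' \ {c}) ≠ Set.univ := by
  set P : Set (Set G) := {D | D ⊆ C ∧ S * D = Set.univ} with hP
  have key : ∀ c ⊆ P, IsChain (· ⊆ ·) c → c.Nonempty → ∃ lb ∈ P, ∀ s ∈ c, lb ⊆ s := by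
    intro c hcP hchain ⟨D₀, hD₀⟩
    refine ⟨⋂₀ c, ⟨?_, ?_⟩, fun s hs => Set.sInter_subset_of_mem hs⟩
    · exact (Set.sInter_subset_of_mem hD₀).trans (hcP hD₀).1
    · apply Set.eq_univ_of_forall
      intro g
      -- T : candidate set
      set T : Set G := (fun s => s⁻¹ * g) '' S with hT
      have hTfin : T.Finite := hfin.image _
      -- the family of intersections
      set F : Set (Set G) := (fun D => T ∩ D) '' c with hF
      have hFfin : F.Finite := by
        apply Set.Finite.subset hTfin.finite_subsets
        rintro _ ⟨D, _, rfl⟩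
        exact Set.inter_subset_left
      have hFne : F.Nonempty := ⟨T ∩ D₀, D₀, hD₀, rfl⟩
      obtain ⟨m, hmF, hmin⟩ : ∃ m ∈ F, ∀ a' ∈ F, id a' ≤ id m → id m = id a' := by
        obtain ⟨m, hmm⟩ := hFfin.exists_minimal hFne
        exact ⟨m, hmm.1, fun a ha h => le_antisymm (hmm.2 ha h) h⟩
      -- m is nonempty
      have hmne : m.Nonempty := by
        obtain ⟨D, hDc, rfl⟩ := hmF
        have : g ∈ S * D := (hcP hDc).2 ▸ Set.mem_univ g
        obtain ⟨s, hs, x, hx, hsx⟩ := this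
        exact ⟨x, ⟨s, hs, by simp [← hsx, mul_assoc]⟩, hx⟩
      -- m is a least element of F
      have hmle : ∀ D ∈ c, m ⊆ T ∩ D := by
        intro D hDc
        obtain ⟨E, hEc, rfl⟩ := hmF
        rcases hchain.total hEc hDc with h | h
        · exact Set.inter_subset_inter_right _ h
        · have h2 := hmin (T ∩ D) ⟨D, hDc, rfl⟩ (Set.inter_subset_inter_right _ h)
          simp only [id] at h2
          exact le_of_eq h2
      obtain ⟨x, hx⟩ := hmne
      obtain ⟨s, hsS, hsx⟩ := (hmle D₀ hD₀ hx).1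
      simp only at hsx
      refine ⟨s, hsS, x, ?_, by rw [← hsx]; group⟩
      exact Set.mem_sInter.2 fun D hDc => (hmle D hDc hx).2
  obtain ⟨C', hC'sub, hC'min⟩ := zorn_superset_nonempty P key C ⟨le_refl C, hC⟩
  refine ⟨C', hC'sub.trans_eq rfl |>.trans (le_refl C), hC'min.1.2, ?_⟩
  · intro c hc habs
    have : C' \ {c} ∈ P := ⟨(Set.diff_subset).trans hC'min.1.1, habs⟩
    have hle := hC'min.2 this Set.diff_subset
    exact (hle hc).2 rfl
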